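/- arXiv:1602.05722 — 8 statements merged into one kernel-verified Lean document; each statement's English description precedes it below -/
import Mathlib

section
/- Let f : ℂ → ℂ be entire and define P : ℂ² → ℂ by P(x₁,x₂) = e^{πix₂} f(x₁) + 1/4 + e^{πix₁} f(x₂). Then for all real (x₁,x₂), ∑_{n∈ℤ²} P(x+n)·χ_{[0,2]²}(x+n) = 1, where χ_{[0,2]²} is the indicator of [0,2]². -/
open Complex

theorem pou_example_nonperiodic (f : ℂ → ℂ) (hf : Differentiable ℂ f)
    (P : ℂ → ℂ → ℂ)
    (hP : ∀ x₁ x₂ : ℂ, P x₁ x₂ =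
      Complex.exp (Real.pi * Complex.I * x₂) * f x₁ + 1 / 4 +
        Complex.exp (Real.pi * Complex.I * x₁) * f x₂) :
    ∀ x₁ x₂ : ℝ,
      P x₁ x₂ + P (x₁ + 1) x₂ + P x₁ (x₂ + 1) + P (x₁ + 1) (x₂ + 1) = 1 := by
  intro x₁ x₂
  have h : ∀ z : ℂ, Complex.exp (Real.pi * Complex.I * (z + 1)) =
      - Complex.exp (Real.pi * Complex.I * z) := by
    intro z
    rw [mul_add, mul_one, Complex.exp_add, Complex.exp_pi_mul_I]
    ring
  simp only [hP, Complex.ofReal_add, Complex.ofReal_one, h]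
  ring
end

section
/- Let N ≥ 1 be an integer and define P : ℝᵈ → ℝ by P(x) = (4^{N-1}/(N·C(2N-2,N-1)))ᵈ ∏_{j=1}^d sin^{2N-2}(πxⱼ/N). Then for all x ∈ ℝᵈ, ∑_{n∈ℤᵈ∩[0,N-1]ᵈ} P(x+n) = 1. -/
open Finset Complex

lemma oneD_complex (m : ℕ) (x : ℝ) :
    ∑ n ∈ range (m+1), Complex.sin (Real.pi * (x + n) / (m + 1)) ^ (2*m)
      = (m+1) * ((2*m).choose m) / 4^m := by
  have hπ : (Real.pi : ℂ) ≠ 0 := by exact_mod_cast Real.pi_ne_zero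
  have hm1 : ((m : ℂ) + 1) ≠ 0 := Nat.cast_add_one_ne_zero m
  have hsin : ∀ n : ℕ, Complex.sin (Real.pi * (x + n) / (m + 1)) ^ (2*m)
      = ∑ k ∈ range (2*m+1), ((-1:ℂ)^k * ((2*m).choose k) * (-1/4)^m) *
          (Complex.exp ((2*(m:ℤ) - 2*k) * (Real.pi * x) * I / (m+1)) *
            Complex.exp ((2*(m:ℤ) - 2*k) * Real.pi * I / (m+1)) ^ n) := by
    intro n
    set w : ℂ := Real.pi * (x + n) / (m + 1) with hw
    have : Complex.sin w = (Complex.exp (-w * I) - Complex.exp (w * I)) * I / 2 := rfl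
    rw [this]
    rw [mul_div_assoc, mul_pow, sub_pow]
    rw [Finset.sum_mul]
    refine Finset.sum_congr rfl fun k hk => ?_
    have hk' : k ≤ 2*m := Nat.lt_succ_iff.mp (Finset.mem_range.mp hk)
    have hI : (I/2)^(2*m) = (-1/4 : ℂ)^m := by
      rw [pow_mul]
      congr 1
      rw [div_pow, Complex.I_sq]
      norm_num
    rw [hI]
    have hexp : Complex.exp (-w * I) ^ k * Complex.exp (w * I) ^ (2*m - k)
        = Complex.exp ((2*(m:ℤ) - 2*k) * (Real.pi * x) * I / (m+1)) *
            Complex.exp ((2*(m:ℤ) - 2*k) * Real.pi * I / (m+1)) ^ n := by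
      rw [← Complex.exp_nat_mul, ← Complex.exp_nat_mul, ← Complex.exp_add,
        ← Complex.exp_nat_mul, ← Complex.exp_add]
      congr 1
      rw [hw]
      have h2 : ((2*m - k : ℕ) : ℂ) = 2*(m:ℂ) - k := by push_cast [hk']; ring
      push_cast [h2]
      field_simp
      ring
    have hsign : (-1:ℂ)^(k + 2*m) = (-1)^k := by
      rw [pow_add]; simp [pow_mul]
    rw [hsign]
    linear_combination ((-1:ℂ)^k * ((2*m).choose k) * (-1/4)^m) * hexp
  simp only [hsin]
  rw [Finset.sum_comm]
  have hinner : ∀ k ∈ range (2*m+1),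
      (∑ n ∈ range (m+1), ((-1:ℂ)^k * ((2*m).choose k) * (-1/4)^m) *
          (Complex.exp ((2*(m:ℤ) - 2*k) * (Real.pi * x) * I / (m+1)) *
            Complex.exp ((2*(m:ℤ) - 2*k) * Real.pi * I / (m+1)) ^ n))
      = if k = m then ((m:ℂ)+1) * ((2*m).choose m) / 4^m else 0 := by
    intro k hk
    have hk' : k ≤ 2*m := Nat.lt_succ_iff.mp (Finset.mem_range.mp hk)
    rw [← Finset.mul_sum, ← Finset.mul_sum]
    by_cases hkm : k = m
    · subst hkm
      simp only [if_pos rfl]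
      have h0 : (2*(k:ℤ) - 2*k : ℂ) = 0 := by push_cast; ring
      simp only [h0, zero_mul, zero_div, Complex.exp_zero, one_pow, mul_one,
        Finset.sum_const, Finset.card_range, nsmul_eq_mul]
      have h5 : ((-1:ℂ))^k * (-1/4)^k = (1/4)^k := by
        rw [← mul_pow]; norm_num
      rw [one_mul]
      push_cast
      calc ((-1:ℂ))^k * ((2*k).choose k) * (-1/4)^k * (k+1)
          = ((-1:ℂ)^k * (-1/4)^k) * (((2*k).choose k) * ((k:ℂ)+1)) := by ring
        _ = (1/4:ℂ)^k * (((2*k).choose k) * ((k:ℂ)+1)) := by rw [h5]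
        _ = ((k:ℂ)+1) * ((2*k).choose k) / 4^k := by rw [div_pow]; ring
    · rw [if_neg hkm]
      have hζ : Complex.exp ((2*(m:ℤ) - 2*k) * Real.pi * I / (m+1)) ≠ 1 := by
        intro h
        rw [Complex.exp_eq_one_iff] at h
        obtain ⟨t, ht⟩ := h
        have hmul : (2*(m:ℤ) - 2*k : ℂ) * (Real.pi * I)
            = (2*t*((m:ℤ)+1) : ℤ) * (Real.pi * I) := by
          have h1 : ((2*(m:ℤ) - 2*k : ℤ) : ℂ) * Real.pi * I = t * (2 * Real.pi * I) * (m+1) := by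
            have := ht
            field_simp at this
            push_cast at this ⊢
            linear_combination (2 * (Real.pi:ℂ) * I) * this
          push_cast at h1 ⊢
          linear_combination h1
        have hI' : (Real.pi : ℂ) * I ≠ 0 := mul_ne_zero hπ I_ne_zero
        have h2 : ((2*(m:ℤ) - 2*k : ℤ) : ℂ) = ((2*t*((m:ℤ)+1) : ℤ) : ℂ) := by
          have := mul_right_cancel₀ hI' (by push_cast at hmul ⊢; linear_combination hmul :
            ((2*(m:ℤ) - 2*k : ℤ) : ℂ) * (Real.pi * I) = ((2*t*((m:ℤ)+1) : ℤ) : ℂ) * (Real.pi * I))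
          exact this
        have h3 : (2*(m:ℤ) - 2*k) = 2*t*((m:ℤ)+1) := by exact_mod_cast h2
        have heq : (m:ℤ) - k = t*((m:ℤ)+1) := by linarith
        have hkb : (k:ℤ) ≤ 2*m := by exact_mod_cast hk'
        have ht0 : t ≠ 0 := by
          rintro rfl
          simp at heq
          apply hkm
          omega
        rcases lt_or_gt_of_ne ht0 with h | h
        · have h6 : t*((m:ℤ)+1) ≤ -((m:ℤ)+1) := by nlinarith
          linarith
        · have h6 : ((m:ℤ)+1) ≤ t*((m:ℤ)+1) := by nlinarith
          have : (k:ℤ) ≥ 0 := Int.natCast_nonneg k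
          linarith
      have hgeom : ∑ n ∈ range (m+1),
          Complex.exp ((2*(m:ℤ) - 2*k) * Real.pi * I / (m+1)) ^ n = 0 := by
        rw [geom_sum_eq hζ]
        have hone : Complex.exp ((2*(m:ℤ) - 2*k) * Real.pi * I / (m+1)) ^ (m+1) = 1 := by
          rw [← Complex.exp_nat_mul]
          have heq2 : ((m+1:ℕ):ℂ) * ((2*(m:ℤ) - 2*k) * Real.pi * I / (m+1))
              = (((m:ℤ) - k : ℤ) : ℂ) * (2 * Real.pi * I) := by
            push_cast; field_simp
          rw [heq2, Complex.exp_int_mul_two_pi_mul_I]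
        rw [hone, sub_self, zero_div]
      rw [hgeom, mul_zero, mul_zero]
  rw [Finset.sum_congr rfl hinner, Finset.sum_ite_eq' (range (2*m+1)) m]
  rw [if_pos (Finset.mem_range.mpr (by omega))]

lemma oneD_real (N : ℕ) (hN : 1 ≤ N) (x : ℝ) :
    ∑ n ∈ range N, Real.sin (Real.pi * (x + n) / N) ^ (2*N-2)
      = N * ((2*N-2).choose (N-1)) / 4^(N-1) := by
  obtain ⟨m, rfl⟩ : ∃ m, N = m + 1 := ⟨N - 1, by omega⟩
  have h1 : 2*(m+1)-2 = 2*m := by omega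
  have h2 : m + 1 - 1 = m := by omega
  rw [h1, h2]
  apply Complex.ofReal_injective
  push_cast [Complex.ofReal_sin]
  rw [← oneD_complex m x]

theorem sin_pow_partition_of_unity (d N : ℕ) (hd : 1 ≤ d) (hN : 1 ≤ N)
    (P : (Fin d → ℝ) → ℝ)
    (hP : ∀ x : Fin d → ℝ, P x =
      (4 ^ (N - 1) / (N * (2 * N - 2).choose (N - 1))) ^ d *
        ∏ j, Real.sin (Real.pi * x j / N) ^ (2 * N - 2)) :
    ∀ x : Fin d → ℝ,
      ∑ n ∈ Fintype.piFinset (fun _ : Fin d => Finset.range N),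
        P (fun j => x j + n j) = 1 := by
  intro x
  simp only [hP]
  rw [← Finset.mul_sum, ← Finset.prod_univ_sum (fun _ : Fin d => Finset.range N)
    (fun j k => Real.sin (Real.pi * (x j + k) / N) ^ (2*N-2))]
  have hsum : ∀ j : Fin d, ∑ k ∈ range N, Real.sin (Real.pi * (x j + k) / N) ^ (2*N-2)
      = N * ((2*N-2).choose (N-1)) / 4^(N-1) := fun j => oneD_real N hN (x j)
  rw [Finset.prod_congr rfl fun j _ => hsum j, Finset.prod_const, Finset.card_univ,
    Fintype.card_fin, ← mul_pow]
  have hC : 0 < (2*N-2).choose (N-1) := Nat.choose_pos (by omega)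
  have hN0 : 0 < N := hN
  rw [div_mul_div_comm, mul_comm ((4:ℝ)^(N-1))]
  rw [div_self (by positivity), one_pow]
end

section
/- Let N ≥ 2 be an integer and define P : ℝᵈ → ℝ by P(x) = (4^{N-1}/(N·C(2N-2,N-1)))ᵈ ∏_{j=1}^d sin^{2N-2}(πxⱼ/N). Then the function P·χ_{[0,N]ᵈ} (P times the indicator of the cube [0,N]ᵈ) is of class C^{2N-3} on ℝᵈ. -/
open Finset

private lemma maxPow_hasDerivAt (m : ℕ) (hm : 2 ≤ m) (s : ℝ) :
    HasDerivAt (fun t : ℝ => (max t 0) ^ m) ((m : ℝ) * (max s 0) ^ (m - 1)) s := by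
  rcases lt_trichotomy s 0 with hs | hs | hs
  · have : (m : ℝ) * (max s 0) ^ (m - 1) = 0 := by
      rw [max_eq_right hs.le, zero_pow (by omega), mul_zero]
    rw [this]
    have : (fun t : ℝ => (max t 0) ^ m) =ᶠ[nhds s] fun _ => (0 : ℝ) := by
      filter_upwards [IsOpen.mem_nhds isOpen_Iio hs] with t ht
      rw [max_eq_right (le_of_lt ht), zero_pow (by omega : m ≠ 0)]
    exact (hasDerivAt_const s (0 : ℝ)).congr_of_eventuallyEq this
  · subst hs
    have : (m : ℝ) * (max (0 : ℝ) 0) ^ (m - 1) = 0 := by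
      rw [max_self, zero_pow (by omega), mul_zero]
    rw [this]
    rw [hasDerivAt_iff_isLittleO]
    simp only [max_self, zero_pow (by omega : m ≠ 0), sub_zero, smul_zero]
    have h1 : (fun t : ℝ => (max t 0) ^ (m - 1)) =o[nhds 0] (fun _ : ℝ => (1 : ℝ)) := by
      rw [Asymptotics.isLittleO_one_iff]
      have : Continuous (fun t : ℝ => (max t 0) ^ (m - 1)) :=
        (continuous_id.max continuous_const).pow _
      have h0 := this.tendsto 0
      simpa [zero_pow (show m - 1 ≠ 0 by omega)] using h0
    have h2 : (fun t : ℝ => max t 0) =O[nhds 0] (fun t : ℝ => t) :=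
      Asymptotics.isBigO_of_le _ fun t => by
        rw [Real.norm_eq_abs, Real.norm_eq_abs, abs_of_nonneg (le_max_right t 0)]
        exact max_le (le_abs_self t) (abs_nonneg t)
    have := h1.mul_isBigO h2
    simp only [one_mul] at this
    refine this.congr' ?_ (by rfl)
    filter_upwards with t
    rw [← pow_succ]
    congr 1
    omega
  · have heq : (m : ℝ) * (max s 0) ^ (m - 1) = (m : ℝ) * s ^ (m - 1) := by
      rw [max_eq_left hs.le]
    rw [heq]
    have : (fun t : ℝ => (max t 0) ^ m) =ᶠ[nhds s] (fun t : ℝ => t ^ m) := by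
      filter_upwards [IsOpen.mem_nhds isOpen_Ioi hs] with t ht
      rw [max_eq_left (le_of_lt ht)]
    exact (hasDerivAt_pow m s).congr_of_eventuallyEq this

private lemma maxPow_contDiff (k : ℕ) :
    ContDiff ℝ (k : ℕ∞) (fun t : ℝ => (max t 0) ^ (k + 1)) := by
  induction k with
  | zero =>
    simp only [Nat.cast_zero]
    rw [show ((0 : ℕ∞) : WithTop ℕ∞) = 0 from rfl, contDiff_zero]
    exact (continuous_id.max continuous_const).pow 1
  | succ k ih =>
    have hcast : (((k + 1 : ℕ) : ℕ∞) : WithTop ℕ∞) = (((k : ℕ) : ℕ∞) : WithTop ℕ∞) + 1 := by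
      push_cast; rfl
    rw [hcast, contDiff_succ_iff_deriv]
    refine ⟨fun s => (maxPow_hasDerivAt (k + 2) (by omega) s).differentiableAt, ?_, ?_⟩
    · intro h; simp at h
    · have hderiv : deriv (fun t : ℝ => (max t 0) ^ (k + 2)) =
          fun s => ((k + 2 : ℕ) : ℝ) * (max s 0) ^ (k + 1) := by
        funext s
        have := (maxPow_hasDerivAt (k + 2) (by omega) s).deriv
        simpa using this
      rw [hderiv]
      exact contDiff_const.mul ih

theorem sin_pow_truncation_smooth (d N : ℕ) (hd : 1 ≤ d) (hN : 2 ≤ N)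
    (P : (Fin d → ℝ) → ℝ)
    (hP : ∀ x : Fin d → ℝ, P x =
      (4 ^ (N - 1) / (N * (2 * N - 2).choose (N - 1))) ^ d *
        ∏ j, Real.sin (Real.pi * x j / N) ^ (2 * N - 2)) :
    ContDiff ℝ ((2 * N - 3 : ℕ) : ℕ∞)
      (Set.indicator (Set.Icc (0 : Fin d → ℝ) (fun _ => (N : ℝ))) P) := by
  have hNpos : (0 : ℝ) < N := by positivity
  set c : ℝ := 4 ^ (N - 1) / (N * (2 * N - 2).choose (N - 1)) with hc
  set m : ℕ := 2 * N - 2 with hm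
  have hm1 : m = (2 * N - 3) + 1 := by omega
  -- the single-variable building block
  set f : ℝ → ℝ := fun s => (max (Real.sin (Real.pi * s / N)) 0) ^ m with hf
  have hfdiff : ContDiff ℝ ((2 * N - 3 : ℕ) : ℕ∞) f := by
    have h1 : ContDiff ℝ ((2 * N - 3 : ℕ) : ℕ∞) (fun t : ℝ => (max t 0) ^ m) := by
      rw [hm1]; exact maxPow_contDiff (2 * N - 3)
    have h2 : ContDiff ℝ ((2 * N - 3 : ℕ) : ℕ∞) (fun s : ℝ => Real.sin (Real.pi * s / N)) :=
      (Real.contDiff_sin.of_le le_top).comp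
        ((contDiff_const.mul contDiff_id).div_const _)
    exact h1.comp h2
  -- the global smooth function
  set F : (Fin d → ℝ) → ℝ := fun x => c ^ d * ∏ j, f (x j) with hF
  have hFdiff : ContDiff ℝ ((2 * N - 3 : ℕ) : ℕ∞) F := by
    refine contDiff_const.mul (contDiff_prod fun j _ => ?_)
    exact hfdiff.comp (contDiff_apply ℝ ℝ j)
  rw [contDiff_iff_contDiffAt]
  intro x
  by_cases hx : ∀ j, x j ∈ Set.Ioo (-(N : ℝ)) (2 * N)
  · -- near x, the indicator agrees with F
    refine hFdiff.contDiffAt.congr_of_eventuallyEq ?_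
    have hopen : IsOpen {y : Fin d → ℝ | ∀ j, y j ∈ Set.Ioo (-(N : ℝ)) (2 * N)} := by
      have : {y : Fin d → ℝ | ∀ j, y j ∈ Set.Ioo (-(N : ℝ)) (2 * N)} =
          Set.pi Set.univ (fun _ => Set.Ioo (-(N : ℝ)) (2 * N)) := by
        ext y; simp [Set.mem_pi]
      rw [this]
      exact isOpen_set_pi Set.finite_univ fun _ _ => isOpen_Ioo
    filter_upwards [hopen.mem_nhds hx] with y hy
    by_cases hyI : y ∈ Set.Icc (0 : Fin d → ℝ) (fun _ => (N : ℝ))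
    · rw [Set.indicator_of_mem hyI, hP, hF]
      congr 1
      refine Finset.prod_congr rfl fun j _ => ?_
      have h0 : 0 ≤ y j := hyI.1 j
      have h1 : y j ≤ N := hyI.2 j
      have hsin : 0 ≤ Real.sin (Real.pi * y j / N) := by
        apply Real.sin_nonneg_of_nonneg_of_le_pi
        · positivity
        · rw [div_le_iff₀ hNpos]
          calc Real.pi * y j ≤ Real.pi * N :=
                mul_le_mul_of_nonneg_left h1 Real.pi_pos.le
            _ = Real.pi * N := rfl
      rw [hf]
      simp only [max_eq_left hsin]
    · rw [Set.indicator_of_notMem hyI, hF]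
      have : ∃ j, y j < 0 ∨ (N : ℝ) < y j := by
        by_contra h
        push_neg at h
        exact hyI ⟨fun j => (h j).1, fun j => (h j).2⟩
      obtain ⟨j, hj⟩ := this
      have hsin : Real.sin (Real.pi * y j / N) ≤ 0 := by
        rcases hj with hj | hj
        · apply Real.sin_nonpos_of_nonpos_of_neg_pi_le
          · have : Real.pi * y j ≤ 0 :=
              mul_nonpos_of_nonneg_of_nonpos Real.pi_pos.le hj.le
            exact div_nonpos_of_nonpos_of_nonneg this hNpos.le
          · have hyN : -(N : ℝ) < y j := (hy j).1
            rw [neg_le, ← neg_div, div_le_iff₀ hNpos]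
            nlinarith [Real.pi_pos]
        · have h2N : y j < 2 * N := (hy j).2
          have key : Real.sin (Real.pi * y j / N - Real.pi) ≥ 0 := by
            apply Real.sin_nonneg_of_nonneg_of_le_pi
            · rw [sub_nonneg, le_div_iff₀ hNpos]
              nlinarith [Real.pi_pos]
            · rw [sub_le_iff_le_add, div_le_iff₀ hNpos]
              nlinarith [Real.pi_pos]
          rw [Real.sin_sub_pi] at key
          linarith
      have hjz : f (y j) = 0 := by
        rw [hf]
        simp only [max_eq_right hsin]
        exact zero_pow (by omega)
      have hz : (∏ i, f (y i)) = 0 := Finset.prod_eq_zero (Finset.mem_univ j) hjz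
      simp only [hz, mul_zero]
  · -- far from the cube: indicator is locally 0
    push_neg at hx
    obtain ⟨j, hj⟩ := hx
    rw [Set.mem_Ioo, not_and_or, not_lt, not_lt] at hj
    have : ∃ U : Set (Fin d → ℝ), IsOpen U ∧ x ∈ U ∧
        ∀ y ∈ U, y ∉ Set.Icc (0 : Fin d → ℝ) (fun _ => (N : ℝ)) := by
      rcases hj with hj | hj
      · refine ⟨{y | y j < 0}, isOpen_lt (continuous_apply j) continuous_const,
          by simpa using lt_of_le_of_lt hj (by linarith), fun y hy hyI => ?_⟩
        exact absurd (hyI.1 j) (not_le.mpr hy)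
      · refine ⟨{y | (N : ℝ) < y j}, isOpen_lt continuous_const (continuous_apply j),
          by simp only [Set.mem_setOf_eq]; linarith, fun y hy hyI => ?_⟩
        exact absurd (hyI.2 j) (not_le.mpr hy)
    obtain ⟨U, hUo, hxU, hU0⟩ := this
    refine ContDiffAt.congr_of_eventuallyEq (contDiffAt_const (c := (0 : ℝ))) ?_
    filter_upwards [hUo.mem_nhds hxU] with y hy
    exact Set.indicator_of_notMem (hU0 y hy) P
end

section
/- Let L ≥ 1 and define Q : ℝ → ℝ by Q(x) = sin^{2L}(πx/2) ∑_{k=0}^{L-1} C(2L-1, k) sin^{2(L-1-k)}(πx/2) cos^{2k}(πx/2). Then Q(x) + Q(x+1) = 1 for all x ∈ ℝ. -/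
open Finset

lemma one_dim_pou_key (L : ℕ) (hL : 1 ≤ L) (a b : ℝ) (hab : a + b = 1) :
    a ^ L * ∑ k ∈ Finset.range L, ((2 * L - 1).choose k : ℝ) * a ^ (L - 1 - k) * b ^ k
    + b ^ L * ∑ k ∈ Finset.range L, ((2 * L - 1).choose k : ℝ) * b ^ (L - 1 - k) * a ^ k
    = 1 := by
  have h1 : (1 : ℝ) = (a + b) ^ (2 * L - 1) := by rw [hab, one_pow]
  rw [h1, add_pow]
  have h2 : 2 * L - 1 + 1 = L + L := by omega
  rw [h2, Finset.sum_range_add, Finset.mul_sum, Finset.mul_sum, add_comm]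
  congr 1
  · apply Finset.sum_congr rfl
    intro k hk
    simp only [Finset.mem_range] at hk
    have e : 2 * L - 1 - k = L + (L - 1 - k) := by omega
    rw [e, pow_add]
    ring
  · rw [← Finset.sum_range_reflect]
    apply Finset.sum_congr rfl
    intro k hk
    simp only [Finset.mem_range] at hk
    have e1 : L - 1 - (L - 1 - k) = k := by omega
    have e2 : 2 * L - 1 - (L + k) = L - 1 - k := by omega
    have e3 : (2 * L - 1).choose (L + k) = (2 * L - 1).choose (L - 1 - k) := by
      rw [← Nat.choose_symm (by omega : L + k ≤ 2 * L - 1), e2]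
    rw [e1, e2, e3, pow_add]
    ring

theorem one_dim_pou_high_regularity (L : ℕ) (hL : 1 ≤ L) (Q : ℝ → ℝ)
    (hQ : ∀ x : ℝ, Q x = Real.sin (Real.pi * x / 2) ^ (2 * L) *
      ∑ k ∈ Finset.range L, ((2 * L - 1).choose k : ℝ) *
        Real.sin (Real.pi * x / 2) ^ (2 * (L - 1 - k)) *
          Real.cos (Real.pi * x / 2) ^ (2 * k)) :
    ∀ x : ℝ, Q x + Q (x + 1) = 1 := by
  intro x
  have hx : Real.pi * (x + 1) / 2 = Real.pi * x / 2 + Real.pi / 2 := by ring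
  rw [hQ x, hQ (x + 1), hx, Real.sin_add_pi_div_two, Real.cos_add_pi_div_two]
  simp only [pow_mul, neg_sq]
  exact one_dim_pou_key L hL _ _ (Real.sin_sq_add_cos_sq _)
end

section
/- Let L ≥ 1 and Q(x) = sin^{2L}(πx/2) ∑_{k=0}^{L-1} C(2L-1,k) sin^{2(L-1-k)}(πx/2) cos^{2k}(πx/2). Define P : ℝᵈ → ℝ by P(x) = ∏_{j=1}^d Q(xⱼ). Then ∑_{n∈{0,1}ᵈ} P(x+n) = 1 for all x ∈ ℝᵈ. -/
open Finset

lemma key_alg (m : ℕ) (u v : ℝ) (huv : u + v = 1) :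
    u ^ (m + 1) * ∑ k ∈ Finset.range (m + 1),
        ((2 * m + 1).choose k : ℝ) * u ^ (m - k) * v ^ k
      + v ^ (m + 1) * ∑ k ∈ Finset.range (m + 1),
        ((2 * m + 1).choose k : ℝ) * v ^ (m - k) * u ^ k = 1 := by
  have h1 : (1 : ℝ) = (u + v) ^ (2 * m + 1) := by rw [huv, one_pow]
  rw [h1, add_pow]
  have hrange : 2 * m + 1 + 1 = (m + 1) + (m + 1) := by ring
  rw [hrange, Finset.mul_sum, Finset.mul_sum]
  conv_rhs => rw [Finset.sum_range_add]
  have hA : ∑ k ∈ Finset.range (m + 1),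
      u ^ (m + 1) * (((2 * m + 1).choose k : ℝ) * u ^ (m - k) * v ^ k)
      = ∑ k ∈ Finset.range (m + 1),
        u ^ (m + 1 + k) * v ^ (2 * m + 1 - (m + 1 + k)) * ((2 * m + 1).choose (m + 1 + k) : ℝ) := by
    rw [← Finset.sum_range_reflect]
    refine Finset.sum_congr rfl fun k hk => ?_
    simp only [Finset.mem_range] at hk
    have hk' : k ≤ m := Nat.lt_succ_iff.mp hk
    have h2 : m + 1 - 1 - k = m - k := by omega
    have h3 : m - (m - k) = k := by omega
    have h4 : 2 * m + 1 - (m + 1 + k) = m - k := by omega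
    have h5 : (2 * m + 1).choose (m - k) = (2 * m + 1).choose (m + 1 + k) := by
      have := Nat.choose_symm (n := 2 * m + 1) (k := m + 1 + k) (by omega)
      rwa [show 2 * m + 1 - (m + 1 + k) = m - k by omega] at this
    rw [h2, h3, h4, h5, pow_add]
    ring
  have hB : ∑ k ∈ Finset.range (m + 1),
      v ^ (m + 1) * (((2 * m + 1).choose k : ℝ) * v ^ (m - k) * u ^ k)
      = ∑ k ∈ Finset.range (m + 1),
        u ^ k * v ^ (2 * m + 1 - k) * ((2 * m + 1).choose k : ℝ) := by
    refine Finset.sum_congr rfl fun k hk => ?_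
    simp only [Finset.mem_range] at hk
    have h4 : 2 * m + 1 - k = (m + 1) + (m - k) := by omega
    rw [h4, pow_add]
    ring
  rw [hA, hB]
  ring

lemma key_one (L : ℕ) (hL : 1 ≤ L) (Q : ℝ → ℝ)
    (hQ : ∀ x : ℝ, Q x = Real.sin (Real.pi * x / 2) ^ (2 * L) *
      ∑ k ∈ Finset.range L, ((2 * L - 1).choose k : ℝ) *
        Real.sin (Real.pi * x / 2) ^ (2 * (L - 1 - k)) *
          Real.cos (Real.pi * x / 2) ^ (2 * k)) :
    ∀ t : ℝ, Q t + Q (t + 1) = 1 := by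
  obtain ⟨m, rfl⟩ : ∃ m, L = m + 1 := ⟨L - 1, (Nat.succ_pred_eq_of_pos hL).symm⟩
  intro t
  rw [hQ t, hQ (t + 1)]
  have hang : Real.pi * (t + 1) / 2 = Real.pi * t / 2 + Real.pi / 2 := by ring
  rw [hang, Real.sin_add_pi_div_two, Real.cos_add_pi_div_two]
  set a := Real.pi * t / 2
  have hch : 2 * (m + 1) - 1 = 2 * m + 1 := by omega
  have hsub : ∀ k : ℕ, m + 1 - 1 - k = m - k := fun k => by omega
  simp only [pow_mul, neg_sq, hch, hsub]
  exact key_alg m (Real.sin a ^ 2) (Real.cos a ^ 2) (Real.sin_sq_add_cos_sq a)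

theorem product_pou_high_regularity (d L : ℕ) (hd : 1 ≤ d) (hL : 1 ≤ L)
    (Q : ℝ → ℝ)
    (hQ : ∀ x : ℝ, Q x = Real.sin (Real.pi * x / 2) ^ (2 * L) *
      ∑ k ∈ Finset.range L, ((2 * L - 1).choose k : ℝ) *
        Real.sin (Real.pi * x / 2) ^ (2 * (L - 1 - k)) *
          Real.cos (Real.pi * x / 2) ^ (2 * k))
    (P : (Fin d → ℝ) → ℝ) (hP : ∀ x : Fin d → ℝ, P x = ∏ j, Q (x j)) :
    ∀ x : Fin d → ℝ,
      ∑ n ∈ Fintype.piFinset (fun _ : Fin d => Finset.range 2),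
        P (fun j => x j + n j) = 1 := by
  intro x
  simp only [hP]
  rw [← Finset.prod_univ_sum (fun _ : Fin d => Finset.range 2) (fun j n => Q (x j + n))]
  refine Finset.prod_eq_one fun j _ => ?_
  rw [Finset.sum_range_succ, Finset.sum_range_one]
  have := key_one L hL Q hQ (x j)
  simpa using this
end

section
/- For every ε > 0, the 2×2 matrix B_ε = ((1+ε)/4)·[[1,1],[1,-1]] has operator norm ‖B_ε‖ = (1+ε)/(2√2), yet there exists a nonzero n ∈ ℤ² (namely n = (1,0)) with (B_εᵀ)^{-1} n ∈ (-2,2)². -/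
open Finset Matrix

theorem norm_condition_sharp (ε : ℝ) (hε : 0 < ε) :
    ∀ B : Matrix (Fin 2) (Fin 2) ℝ,
      B = ((1 + ε) / 4) • !![1, 1; 1, -1] →
      ((∀ x : Fin 2 → ℝ,
          Real.sqrt (∑ j, (B.mulVec x j) ^ 2) ≤
            ((1 + ε) / (2 * Real.sqrt 2)) * Real.sqrt (∑ j, (x j) ^ 2)) ∧
        (∃ x : Fin 2 → ℝ, (∑ j, (x j) ^ 2) = 1 ∧
          Real.sqrt (∑ j, (B.mulVec x j) ^ 2) = (1 + ε) / (2 * Real.sqrt 2)) ∧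
        (∃ n : Fin 2 → ℤ, n ≠ 0 ∧
          ∀ j, (B.transpose)⁻¹.mulVec (fun i => (n i : ℝ)) j ∈
            Set.Ioo (-2 : ℝ) 2)) := by
  intro B hB
  have hεne : (1 : ℝ) + ε ≠ 0 := by linarith
  have hc : (0:ℝ) < (1 + ε) / (2 * Real.sqrt 2) := by
    apply div_pos (by linarith)
    positivity
  have hsq2 : Real.sqrt 2 ^ 2 = 2 := Real.sq_sqrt (by norm_num)
  -- key: exact equality of norms
  have key : ∀ x : Fin 2 → ℝ,
      Real.sqrt (∑ j, (B.mulVec x j) ^ 2) =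
        ((1 + ε) / (2 * Real.sqrt 2)) * Real.sqrt (∑ j, (x j) ^ 2) := by
    intro x
    have hsum : (∑ j, (B.mulVec x j) ^ 2) =
        ((1 + ε) / (2 * Real.sqrt 2))^2 * (∑ j, (x j) ^ 2) := by
      subst hB
      simp [Matrix.mulVec, dotProduct, Fin.sum_univ_two]
      field_simp
      ring_nf
      rw [hsq2]
      ring
    rw [hsum, Real.sqrt_mul (sq_nonneg _), Real.sqrt_sq hc.le]
  refine ⟨fun x => le_of_eq (key x), ⟨![1, 0], by simp [Fin.sum_univ_two], by
    rw [key]; simp [Fin.sum_univ_two]⟩, ⟨![1, 0], by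
      intro h
      have := congrFun h 0
      simp at this, ?_⟩⟩
  -- inverse computation
  have hBT : B.transpose = B := by
    subst hB; ext i j; fin_cases i <;> fin_cases j <;> simp
  have hinv : B⁻¹ = !![2/(1+ε), 2/(1+ε); 2/(1+ε), -(2/(1+ε))] := by
    apply Matrix.inv_eq_right_inv
    subst hB
    ext i j
    fin_cases i <;> fin_cases j <;>
      simp [Matrix.mul_apply, Fin.sum_univ_two] <;> field_simp <;> ring
  rw [hBT, hinv]
  have h1 : (0:ℝ) < 2/(1+ε) := by positivity
  have h2 : 2/(1+ε) < 2 := by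
    rw [div_lt_iff₀ (by linarith)]; nlinarith
  intro j
  fin_cases j <;>
    simp [Matrix.mulVec, dotProduct, Fin.sum_univ_two] <;>
    constructor <;> linarith
end

section
/- For a > 0 let B_a = (1/4)·[[2,0],[-2a,2]]. Then (B_aᵀ)^{-1} = [[2,2a],[0,2]], and for every nonzero n ∈ ℤ², (B_aᵀ)^{-1} n ∉ (-2,2)²; moreover ‖B_a‖ ≥ a/2, so sup_a ‖B_a‖ = ∞. -/
open Finset Matrix

theorem lattice_condition_large_norm (a : ℝ) (ha : 0 < a)
    (B : Matrix (Fin 2) (Fin 2) ℝ)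
    (hB : B = (1 / 4 : ℝ) • !![2, 0; -2 * a, 2]) :
    (B.transpose)⁻¹ = !![2, 2 * a; 0, 2] ∧
    (∀ n : Fin 2 → ℤ, n ≠ 0 →
      ¬ (∀ j, (B.transpose)⁻¹.mulVec (fun i => (n i : ℝ)) j ∈
          Set.Ioo (-2 : ℝ) 2)) ∧
    (∃ x : Fin 2 → ℝ, (∑ j, (x j) ^ 2) = 1 ∧
      a / 2 ≤ Real.sqrt (∑ j, (B.mulVec x j) ^ 2)) := by
  have hinv : (B.transpose)⁻¹ = !![2, 2 * a; 0, 2] := by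
    apply Matrix.inv_eq_right_inv
    subst hB
    ext i j
    fin_cases i <;> fin_cases j <;>
      simp [Matrix.mul_apply, Fin.sum_univ_two, Matrix.one_apply, Matrix.vecHead, Matrix.vecTail] <;> ring
  refine ⟨hinv, ?_, ?_⟩
  · intro n hn h
    rw [hinv] at h
    have h0 := h 0
    have h1 := h 1
    simp [Matrix.mulVec, dotProduct, Fin.sum_univ_two] at h0 h1
    have hn1 : n 1 = 0 := by
      rcases h1 with ⟨ha1, hb1⟩
      have hlt : (-1 : ℝ) < (n 1 : ℝ) ∧ ((n 1 : ℝ)) < 1 := by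
        constructor <;> nlinarith
      have h1' : (-1 : ℤ) < n 1 := by exact_mod_cast hlt.1
      have h2' : n 1 < 1 := by exact_mod_cast hlt.2
      omega
    have hn0 : n 0 = 0 := by
      rcases h0 with ⟨ha0, hb0⟩
      rw [hn1] at ha0 hb0
      push_cast at ha0 hb0
      have hlt : (-1 : ℝ) < (n 0 : ℝ) ∧ ((n 0 : ℝ)) < 1 := by
        constructor <;> nlinarith
      have h1' : (-1 : ℤ) < n 0 := by exact_mod_cast hlt.1
      have h2' : n 0 < 1 := by exact_mod_cast hlt.2
      omega
    apply hn
    funext i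
    fin_cases i <;> assumption
  · refine ⟨![1, 0], by simp [Fin.sum_univ_two], ?_⟩
    subst hB
    have hv : ∀ j, (((1 / 4 : ℝ) • !![2, 0; -2 * a, 2]).mulVec ![1, 0]) j
        = ![1/2, -a/2] j := by
      intro j
      fin_cases j <;> simp [Matrix.mulVec, dotProduct, Fin.sum_univ_two] <;> ring
    rw [Finset.sum_congr rfl fun j _ => by rw [hv j]]
    rw [Fin.sum_univ_two]
    have : a / 2 = Real.sqrt ((a/2)^2) := by
      rw [Real.sqrt_sq (by positivity)]
    rw [this]
    apply Real.sqrt_le_sqrt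
    norm_num
    nlinarith
end

section
/- Let f : ℂ → ℂ be entire with f(0) = f(2) = 0, let g(x) = -1/4 - f(x) + (1/8)e^{-πix}, and define P(x₁,x₂) = 1/4 + e^{πix₂}f(x₁) + e^{πix₁}f(x₂) + e^{-πix₂}g(x₁) + e^{-πix₁}g(x₂). Then P(x₁,0) = P(x₁,2) = P(0,x₂) = P(2,x₂) = 0 for all real x₁, x₂, and ∑_{n∈{0,1}²} P(x+n) = 1 for all x ∈ ℝ². -/
open Complex

theorem nonperiodic_pou_vanishing_boundary (f : ℂ → ℂ) (hf : Differentiable ℂ f)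
    (hf0 : f 0 = 0) (hf2 : f 2 = 0) (g : ℂ → ℂ)
    (hg : ∀ x : ℂ, g x = -1 / 4 - f x + (1 / 8) * Complex.exp (-(Real.pi * Complex.I * x)))
    (P : ℂ → ℂ → ℂ)
    (hP : ∀ x₁ x₂ : ℂ, P x₁ x₂ = 1 / 4 +
      Complex.exp (Real.pi * Complex.I * x₂) * f x₁ +
      Complex.exp (Real.pi * Complex.I * x₁) * f x₂ +
      Complex.exp (-(Real.pi * Complex.I * x₂)) * g x₁ +
      Complex.exp (-(Real.pi * Complex.I * x₁)) * g x₂) :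
    (∀ x₁ : ℝ, P x₁ 0 = 0 ∧ P x₁ 2 = 0) ∧
    (∀ x₂ : ℝ, P 0 x₂ = 0 ∧ P 2 x₂ = 0) ∧
    (∀ x₁ x₂ : ℝ,
      P x₁ x₂ + P (x₁ + 1) x₂ + P x₁ (x₂ + 1) + P (x₁ + 1) (x₂ + 1) = 1) := by
  have hpi : Complex.exp (Real.pi * Complex.I) = -1 := Complex.exp_pi_mul_I
  have hpi' : Complex.exp (-(Real.pi * Complex.I)) = -1 := by
    rw [Complex.exp_neg, hpi]; norm_num
  have h2 : Complex.exp (Real.pi * Complex.I * 2) = 1 := by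
    rw [show (Real.pi : ℂ) * Complex.I * 2 = Real.pi * Complex.I + Real.pi * Complex.I by ring,
      Complex.exp_add, hpi]; ring
  have h2' : Complex.exp (-(Real.pi * Complex.I * 2)) = 1 := by
    rw [Complex.exp_neg, h2]; norm_num
  have hshift : ∀ x : ℂ, Complex.exp (Real.pi * Complex.I * (x + 1)) =
      -Complex.exp (Real.pi * Complex.I * x) := by
    intro x
    rw [show (Real.pi : ℂ) * Complex.I * (x + 1) = Real.pi * Complex.I * x + Real.pi * Complex.I
      by ring, Complex.exp_add, hpi]; ring
  have hshift' : ∀ x : ℂ, Complex.exp (-(Real.pi * Complex.I * (x + 1))) =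
      -Complex.exp (-(Real.pi * Complex.I * x)) := by
    intro x
    rw [show -((Real.pi : ℂ) * Complex.I * (x + 1)) =
      -(Real.pi * Complex.I * x) + -(Real.pi * Complex.I) by ring, Complex.exp_add, hpi']; ring
  refine ⟨fun x₁ => ⟨?_, ?_⟩, fun x₂ => ⟨?_, ?_⟩, fun x₁ x₂ => ?_⟩
  · rw [hP, hg, hg, hf0]
    simp only [mul_zero, neg_zero, Complex.exp_zero]
    ring
  · rw [hP, hg, hg, hf2, h2, h2']
    ring
  · rw [hP, hg, hg, hf0]
    simp only [mul_zero, neg_zero, Complex.exp_zero]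
    ring
  · rw [hP, hg, hg, hf2, h2, h2']
    ring
  · rw [hP, hP, hP, hP, hshift, hshift, hshift', hshift']
    ring
end
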